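/- Let p be a prime and let S be a nontrivial finite set of words over {0, …, p−1} containing the empty word, closed under prefixes, and such that every non-leaf node of S splits completely. For n ≥ 1 let Lₙ(S) = {ℓ₁ ++ ⋯ ++ ℓₙ : ℓ₁, …, ℓₙ ∈ L(S)} be the set of concatenations of n leaves of S. Then for every n ≥ 1, the p-adic balls {B_w : w ∈ Lₙ(S)} form a partition of ℤ_p, and the number of elements of Lₙ(S) equals (#L(S))ⁿ. -/

import Mathlib

/-- `ν(w) = Σ_{k<n} a_k p^k` for a word `w = [a₀, …, a_{n-1}]` over `{0, …, p-1}`. -/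
def wordVal (p : ℕ) (w : List (Fin p)) : ℕ :=
  w.foldr (fun a acc => a.val + p * acc) 0

/-- The `p`-adic ball `B_w = {x ∈ ℤ_p : ‖x − ν(w)‖ ≤ p^{−n}}` associated to a word `w`
of length `n`. -/
def padicBall (p : ℕ) [Fact p.Prime] (w : List (Fin p)) : Set ℤ_[p] :=
  {x : ℤ_[p] | ‖x - (wordVal p w : ℤ_[p])‖ ≤ (p : ℝ) ^ (-(w.length : ℤ))}

/-- The leaves of a set `S` of words: elements of `S` none of whose children lies
in `S`. -/
def leaves (p : ℕ) (S : Set (List (Fin p))) : Set (List (Fin p)) :=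
  {s ∈ S | ∀ c : Fin p, s ++ [c] ∉ S}

/-- The balls indexed by the words of `W` form a partition of `ℤ_p`: they are nonempty,
pairwise disjoint and cover `ℤ_p`. -/
def IsBallPartition (p : ℕ) [Fact p.Prime] (W : Set (List (Fin p))) : Prop :=
  (∀ w ∈ W, (padicBall p w).Nonempty) ∧
  (∀ v ∈ W, ∀ w ∈ W, v ≠ w → Disjoint (padicBall p v) (padicBall p w)) ∧
  (⋃ w ∈ W, padicBall p w) = Set.univ

/-- `Lₙ(S)`: the set of concatenations of `n` leaves of `S`. -/
def leafPower (p : ℕ) (S : Set (List (Fin p))) (n : ℕ) : Set (List (Fin p)) :=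
  {w | ∃ l : List (List (Fin p)),
    l.length = n ∧ (∀ x ∈ l, x ∈ leaves p S) ∧ w = l.flatten}

lemma wordVal_nil (p : ℕ) : wordVal p [] = 0 := rfl

lemma wordVal_cons (p : ℕ) (a : Fin p) (w : List (Fin p)) :
    wordVal p (a :: w) = a.val + p * wordVal p w := rfl

lemma wordVal_lt {p : ℕ} (hp : 0 < p) (w : List (Fin p)) : wordVal p w < p ^ w.length := by
  induction w with
  | nil => simp [wordVal_nil]
  | cons a w ih =>
    have ha := a.isLt
    rw [wordVal_cons, List.length_cons, pow_succ]
    calc a.val + p * wordVal p w < p * (wordVal p w + 1) := by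
          rw [Nat.mul_add, Nat.mul_one]; omega
      _ ≤ p * p ^ w.length := Nat.mul_le_mul_left _ ih
      _ = p ^ w.length * p := Nat.mul_comm _ _

lemma wordVal_append (p : ℕ) (v w : List (Fin p)) :
    wordVal p (v ++ w) = wordVal p v + p ^ v.length * wordVal p w := by
  induction v with
  | nil => simp [wordVal_nil]
  | cons a v ih =>
    simp only [List.cons_append, wordVal_cons, ih, List.length_cons, pow_succ]
    ring

lemma wordVal_inj {p : ℕ} (hp : 0 < p) :
    ∀ {v w : List (Fin p)}, v.length = w.length → wordVal p v = wordVal p w → v = w := by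
  intro v
  induction v with
  | nil => intro w hl _; cases w with
    | nil => rfl
    | cons b w => simp at hl
  | cons a v ih =>
    intro w hl hv
    cases w with
    | nil => simp at hl
    | cons b w =>
      rw [wordVal_cons, wordVal_cons] at hv
      have hab : a.val = b.val := by
        have h1 : (a.val + p * wordVal p v) % p = (b.val + p * wordVal p w) % p := by rw [hv]
        rwa [Nat.add_mul_mod_self_left, Nat.add_mul_mod_self_left,
          Nat.mod_eq_of_lt a.isLt, Nat.mod_eq_of_lt b.isLt] at h1
      have hvw : wordVal p v = wordVal p w := by
        have : p * wordVal p v = p * wordVal p w := by omega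
        exact Nat.eq_of_mul_eq_mul_left hp this
      simp at hl
      rw [Fin.ext hab, ih hl hvw]

lemma wordVal_prefix {p : ℕ} (hp : 0 < p) {v w : List (Fin p)} (hlen : v.length ≤ w.length)
    (hdvd : (p ^ v.length : ℤ) ∣ (wordVal p w : ℤ) - wordVal p v) : v <+: w := by
  have hlent : (w.take v.length).length = v.length := by
    rw [List.length_take]; omega
  have hval : wordVal p w
      = wordVal p (w.take v.length) + p ^ v.length * wordVal p (w.drop v.length) := by
    conv_lhs => rw [← List.take_append_drop v.length w]
    rw [wordVal_append, hlent]
  have h2 : (p ^ v.length : ℤ) ∣ (wordVal p (w.take v.length) : ℤ) - wordVal p v := by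
    have h3 : (wordVal p (w.take v.length) : ℤ) - wordVal p v
        = ((wordVal p w : ℤ) - wordVal p v)
          - p ^ v.length * wordVal p (w.drop v.length) := by
      rw [hval]; push_cast; ring
    rw [h3]
    exact dvd_sub hdvd (Dvd.intro _ rfl)
  have hmeq : wordVal p v ≡ wordVal p (w.take v.length) [MOD p ^ v.length] := by
    rw [Nat.modEq_iff_dvd]
    exact_mod_cast h2
  have heq : wordVal p v = wordVal p (w.take v.length) := by
    have h4 := wordVal_lt hp v
    have h5 := wordVal_lt hp (w.take v.length)
    rw [hlent] at h5
    have := hmeq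
    unfold Nat.ModEq at this
    rwa [Nat.mod_eq_of_lt h4, Nat.mod_eq_of_lt h5] at this
  have : v = w.take v.length := wordVal_inj hp hlent.symm heq
  rw [this]
  exact List.take_prefix _ _


section Balls
variable {p : ℕ} [Fact p.Prime]

lemma mem_padicBall_iff_dvd {w : List (Fin p)} {x : ℤ_[p]} :
    x ∈ padicBall p w ↔ (p : ℤ_[p]) ^ w.length ∣ x - (wordVal p w : ℤ_[p]) := by
  rw [padicBall, Set.mem_setOf_eq, PadicInt.norm_le_pow_iff_mem_span_pow,
    Ideal.mem_span_singleton]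

lemma self_mem_padicBall (w : List (Fin p)) : ((wordVal p w : ℤ_[p])) ∈ padicBall p w := by
  rw [mem_padicBall_iff_dvd]; simp

lemma p_pow_ne_zero (k : ℕ) : ((p : ℤ_[p]) ^ k) ≠ 0 :=
  pow_ne_zero _ (Nat.cast_ne_zero.mpr (Fact.out (p := p.Prime)).pos.ne')

lemma wordVal_append_cast (v w : List (Fin p)) :
    ((wordVal p (v ++ w) : ℤ_[p]))
      = (wordVal p v : ℤ_[p]) + (p : ℤ_[p]) ^ v.length * (wordVal p w : ℤ_[p]) := by
  have := wordVal_append p v w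
  push_cast [this]
  ring

lemma mem_padicBall_append {v w : List (Fin p)} {x : ℤ_[p]} :
    x ∈ padicBall p (v ++ w) ↔
      ∃ y ∈ padicBall p w, x = (wordVal p v : ℤ_[p]) + (p : ℤ_[p]) ^ v.length * y := by
  constructor
  · intro hx
    rw [mem_padicBall_iff_dvd, List.length_append, wordVal_append_cast, pow_add] at hx
    have h1 : (p : ℤ_[p]) ^ v.length ∣ x - (wordVal p v : ℤ_[p]) := by
      have h2 : x - (wordVal p v : ℤ_[p])
          = (x - ((wordVal p v : ℤ_[p]) + (p : ℤ_[p]) ^ v.length * (wordVal p w : ℤ_[p])))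
            + (p : ℤ_[p]) ^ v.length * (wordVal p w : ℤ_[p]) := by ring
      rw [h2]
      exact dvd_add (dvd_trans (Dvd.intro _ rfl) hx) (Dvd.intro _ rfl)
    obtain ⟨y, hy⟩ := h1
    refine ⟨y, ?_, by linear_combination hy⟩
    rw [mem_padicBall_iff_dvd]
    have h3 : x - ((wordVal p v : ℤ_[p]) + (p : ℤ_[p]) ^ v.length * (wordVal p w : ℤ_[p]))
        = (p : ℤ_[p]) ^ v.length * (y - (wordVal p w : ℤ_[p])) := by
      linear_combination hy
    rw [h3] at hx
    exact (mul_dvd_mul_iff_left (p_pow_ne_zero v.length)).mp hx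
  · rintro ⟨y, hy, rfl⟩
    rw [mem_padicBall_iff_dvd] at hy ⊢
    rw [List.length_append, wordVal_append_cast, pow_add]
    have h3 : (wordVal p v : ℤ_[p]) + (p : ℤ_[p]) ^ v.length * y
        - ((wordVal p v : ℤ_[p]) + (p : ℤ_[p]) ^ v.length * (wordVal p w : ℤ_[p]))
        = (p : ℤ_[p]) ^ v.length * (y - (wordVal p w : ℤ_[p])) := by ring
    rw [h3]
    exact mul_dvd_mul_left _ hy

lemma prefix_of_mem_padicBall {v w : List (Fin p)} (hlen : v.length ≤ w.length) {x : ℤ_[p]}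
    (hv : x ∈ padicBall p v) (hw : x ∈ padicBall p w) : v <+: w := by
  rw [mem_padicBall_iff_dvd] at hv hw
  have h1 : (p : ℤ_[p]) ^ v.length ∣ x - (wordVal p w : ℤ_[p]) :=
    dvd_trans (pow_dvd_pow _ hlen) hw
  have h2 : (p : ℤ_[p]) ^ v.length ∣ ((wordVal p w : ℤ_[p]) - (wordVal p v : ℤ_[p])) := by
    have h3 : (wordVal p w : ℤ_[p]) - (wordVal p v : ℤ_[p])
        = (x - (wordVal p v : ℤ_[p])) - (x - (wordVal p w : ℤ_[p])) := by ring
    rw [h3]; exact dvd_sub hv h1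
  have h4 : ((p : ℤ) ^ v.length) ∣ ((wordVal p w : ℤ) - (wordVal p v : ℤ)) := by
    rw [← PadicInt.pow_p_dvd_int_iff]
    push_cast
    exact h2
  exact wordVal_prefix (Fact.out (p := p.Prime)).pos hlen h4

end Balls

section Comb
variable {p : ℕ} {S : Set (List (Fin p))}

lemma leaves_prefixfree (hpref : ∀ v ∈ S, ∀ w : List (Fin p), w <+: v → w ∈ S)
    {v w : List (Fin p)} (hv : v ∈ leaves p S) (hw : w ∈ leaves p S) (hvw : v <+: w) :
    v = w := by
  obtain ⟨r, rfl⟩ := hvw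
  cases r with
  | nil => simp
  | cons c r' =>
    exact absurd (hpref _ hw.1 _ ⟨r', by simp⟩) (hv.2 c)

lemma flatten_injOn (hpref : ∀ v ∈ S, ∀ w : List (Fin p), w <+: v → w ∈ S) :
    ∀ (n : ℕ) (l m : List (List (Fin p))), l.length = n → m.length = n →
      (∀ x ∈ l, x ∈ leaves p S) → (∀ x ∈ m, x ∈ leaves p S) →
      l.flatten = m.flatten → l = m := by
  intro n
  induction n with
  | zero =>
    intro l m hl hm _ _ _
    rw [List.length_eq_zero_iff] at hl hm
    rw [hl, hm]
  | succ n ih =>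
    intro l m hl hm hla hma hflat
    cases l with
    | nil => simp at hl
    | cons a l' =>
      cases m with
      | nil => simp at hm
      | cons b m' =>
        rw [List.flatten_cons, List.flatten_cons] at hflat
        have hab : a = b := by
          have h1 : a <+: b ++ m'.flatten := hflat ▸ List.prefix_append a l'.flatten
          have h2 : b <+: b ++ m'.flatten := List.prefix_append b m'.flatten
          rcases List.prefix_or_prefix_of_prefix h1 h2 with h | h
          · exact leaves_prefixfree hpref (hla a (by simp)) (hma b (by simp)) h
          · exact (leaves_prefixfree hpref (hma b (by simp)) (hla a (by simp)) h).symm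
        subst hab
        have hflat' : l'.flatten = m'.flatten := by
          exact List.append_cancel_left hflat
        rw [ih l' m' (by simpa using hl) (by simpa using hm)
          (fun x hx => hla x (by simp [hx])) (fun x hx => hma x (by simp [hx])) hflat']

lemma leafPower_prefixfree (hpref : ∀ v ∈ S, ∀ w : List (Fin p), w <+: v → w ∈ S) :
    ∀ (n : ℕ), ∀ v ∈ leafPower p S n, ∀ w ∈ leafPower p S n, v <+: w → v = w := by
  intro n
  induction n with
  | zero =>
    rintro v ⟨l, hl, -, rfl⟩ w ⟨m, hm, -, rfl⟩ -
    rw [List.length_eq_zero_iff] at hl hm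
    rw [hl, hm]
  | succ n ih =>
    rintro v ⟨l, hl, hla, rfl⟩ w ⟨m, hm, hma, rfl⟩ hvw
    cases l with
    | nil => simp at hl
    | cons a l' =>
      cases m with
      | nil => simp at hm
      | cons b m' =>
        rw [List.flatten_cons] at hvw ⊢
        have hab : a = b := by
          have h1 : a <+: b ++ m'.flatten :=
            (List.prefix_append a l'.flatten).trans hvw
          have h2 : b <+: b ++ m'.flatten := List.prefix_append b m'.flatten
          rcases List.prefix_or_prefix_of_prefix h1 h2 with h | h
          · exact leaves_prefixfree hpref (hla a (by simp)) (hma b (by simp)) h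
          · exact (leaves_prefixfree hpref (hma b (by simp)) (hla a (by simp)) h).symm
        subst hab
        have h3 : l'.flatten <+: m'.flatten := (List.prefix_append_right_inj a).mp hvw
        have h4 := ih l'.flatten ⟨l', by simpa using hl, fun x hx => hla x (by simp [hx]), rfl⟩
          m'.flatten ⟨m', by simpa using hm, fun x hx => hma x (by simp [hx]), rfl⟩ h3
        simp [h4]

lemma ncard_prod' {α β : Type*} (A : Set α) (B : Set β) :
    (A ×ˢ B).ncard = A.ncard * B.ncard := by
  rw [← Nat.card_coe_set_eq, Nat.card_congr (Equiv.Set.prod A B), Nat.card_prod,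
    Nat.card_coe_set_eq, Nat.card_coe_set_eq]

lemma listSet_ncard {α : Type*} (A : Set α) :
    ∀ n : ℕ, {l : List α | l.length = n ∧ ∀ x ∈ l, x ∈ A}.ncard = A.ncard ^ n := by
  intro n
  induction n with
  | zero =>
    have h : {l : List α | l.length = 0 ∧ ∀ x ∈ l, x ∈ A} = {[]} := by
      ext l
      constructor
      · rintro ⟨h0, -⟩
        simpa [List.length_eq_zero_iff] using h0
      · rintro rfl
        simp
    rw [h]
    simp
  | succ n ih =>
    have h : {l : List α | l.length = n + 1 ∧ ∀ x ∈ l, x ∈ A}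
        = (fun q : α × List α => q.1 :: q.2) '' (A ×ˢ {l : List α | l.length = n ∧ ∀ x ∈ l, x ∈ A}) := by
      ext l
      constructor
      · rintro ⟨hlen, hall⟩
        cases l with
        | nil => simp at hlen
        | cons a l' =>
          exact ⟨(a, l'), ⟨hall a (by simp), by simpa using hlen,
            fun x hx => hall x (by simp [hx])⟩, rfl⟩
      · rintro ⟨⟨a, l'⟩, ⟨hA, hlen, hall⟩, rfl⟩
        refine ⟨by simpa using hlen, ?_⟩
        intro x hx
        rcases List.mem_cons.mp hx with rfl | hx
        · exact hA
        · exact hall x hx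
    have hinj : Function.Injective (fun q : α × List α => q.1 :: q.2) := by
      rintro ⟨a, l⟩ ⟨b, m⟩ h
      simp only [List.cons.injEq] at h
      exact Prod.ext h.1 h.2
    rw [h, Set.ncard_image_of_injective _ hinj, ncard_prod', ih, pow_succ]
    ring

end Comb

section Cover
variable {p : ℕ} [Fact p.Prime] {S : Set (List (Fin p))}

lemma exists_leaf_ball (hfin : S.Finite) (hroot : ([] : List (Fin p)) ∈ S)
    (hsplit : ∀ s ∈ S \ leaves p S, ∀ c : Fin p, s ++ [c] ∈ S) (x : ℤ_[p]) :
    ∃ w ∈ leaves p S, x ∈ padicBall p w := by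
  set T := {w ∈ S | x ∈ padicBall p w} with hT
  have hTfin : T.Finite := hfin.subset fun w hw => hw.1
  have hTne : T.Nonempty := ⟨[], hroot, by rw [mem_padicBall_iff_dvd]; simp [wordVal_nil]⟩
  obtain ⟨w, hwT, hmax⟩ := Set.Finite.exists_maximalFor List.length T hTfin hTne
  by_cases hleaf : w ∈ leaves p S
  · exact ⟨w, hleaf, hwT.2⟩
  · exfalso
    have hx := hwT.2
    rw [mem_padicBall_iff_dvd] at hx
    obtain ⟨y, hy⟩ := hx
    have hc : y.appr 1 < p := by simpa using PadicInt.appr_lt y 1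
    set c : Fin p := ⟨y.appr 1, hc⟩ with hcdef
    have hchild : w ++ [c] ∈ S := hsplit w ⟨hwT.1, hleaf⟩ c
    have hyball : y ∈ padicBall p [c] := by
      rw [mem_padicBall_iff_dvd]
      have h1 := PadicInt.appr_spec 1 y
      rw [Ideal.mem_span_singleton] at h1
      simpa [wordVal_cons, wordVal_nil] using h1
    have hxchild : x ∈ padicBall p (w ++ [c]) :=
      mem_padicBall_append.mpr ⟨y, hyball, by linear_combination hy⟩
    have := hmax (j := w ++ [c]) ⟨hchild, hxchild⟩ (by simp)
    simp at this

lemma leafPower_cover (hfin : S.Finite) (hroot : ([] : List (Fin p)) ∈ S)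
    (hsplit : ∀ s ∈ S \ leaves p S, ∀ c : Fin p, s ++ [c] ∈ S) :
    ∀ n : ℕ, ∀ x : ℤ_[p], ∃ w ∈ leafPower p S n, x ∈ padicBall p w := by
  intro n
  induction n with
  | zero =>
    intro x
    exact ⟨[], ⟨[], rfl, by simp, rfl⟩, by rw [mem_padicBall_iff_dvd]; simp [wordVal_nil]⟩
  | succ n ih =>
    intro x
    obtain ⟨a, ha, hxa⟩ := exists_leaf_ball hfin hroot hsplit x
    rw [mem_padicBall_iff_dvd] at hxa
    obtain ⟨y, hy⟩ := hxa
    obtain ⟨u, ⟨l, hl, hla, rfl⟩, hyu⟩ := ih y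
    refine ⟨a ++ l.flatten, ⟨a :: l, by simp [hl], ?_, by simp⟩, ?_⟩
    · intro z hz
      rcases List.mem_cons.mp hz with rfl | hz
      · exact ha
      · exact hla z hz
    · exact mem_padicBall_append.mpr ⟨y, hyu, by linear_combination hy⟩

end Cover


/-- If `S` is a nontrivial finite prefix-closed set of words containing the empty word in
which every non-leaf node splits completely, then for every `n ≥ 1` the balls indexed by
`Lₙ(S)` partition `ℤ_p`, and `#Lₙ(S) = (#L(S))ⁿ`. -/
theorem leafPower_partition_and_card (p : ℕ) [Fact p.Prime]
    (S : Set (List (Fin p))) (hfin : S.Finite) (hroot : ([] : List (Fin p)) ∈ S)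
    (hpref : ∀ v ∈ S, ∀ w : List (Fin p), w <+: v → w ∈ S)
    (hnontriv : ∃ w ∈ S, w ≠ [])
    (hsplit : ∀ s ∈ S \ leaves p S, ∀ c : Fin p, s ++ [c] ∈ S) :
    ∀ n : ℕ, 1 ≤ n →
      IsBallPartition p (leafPower p S n) ∧
      (leafPower p S n).ncard = (leaves p S).ncard ^ n := by
  intro n hn
  constructor
  · refine ⟨?_, ?_, ?_⟩
    · intro w _
      exact ⟨_, self_mem_padicBall w⟩
    · intro v hv w hw hne
      by_contra hdis
      rw [Set.not_disjoint_iff] at hdis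
      obtain ⟨x, hxv, hxw⟩ := hdis
      rcases le_total v.length w.length with h | h
      · exact hne (leafPower_prefixfree hpref n v hv w hw (prefix_of_mem_padicBall h hxv hxw))
      · exact hne ((leafPower_prefixfree hpref n w hw v hv (prefix_of_mem_padicBall h hxw hxv)).symm)
    · rw [Set.eq_univ_iff_forall]
      intro x
      obtain ⟨w, hw, hx⟩ := leafPower_cover hfin hroot hsplit n x
      exact Set.mem_biUnion hw hx
  · have himg : leafPower p S n
        = List.flatten '' {l : List (List (Fin p)) | l.length = n ∧ ∀ x ∈ l, x ∈ leaves p S} := by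
      ext w
      constructor
      · rintro ⟨l, hl, hla, rfl⟩
        exact ⟨l, ⟨hl, hla⟩, rfl⟩
      · rintro ⟨l, ⟨hl, hla⟩, rfl⟩
        exact ⟨l, hl, hla, rfl⟩
    rw [himg, Set.ncard_image_of_injOn ?_, listSet_ncard]
    intro l hl m hm h
    exact flatten_injOn hpref n l m hl.1 hm.1 hl.2 hm.2 h
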